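/- Let 0 < δ < 1 and let ρ ∈ (0,σ) be chosen so that ν_{a,σ}(cap(a,ρ)) = δ. Then for every Borel set B ⊆ cap(a,σ) with 0 < ν_{a,σ}(B) ≤ δ, one has μ(B) ≤ μ(cap(a,ρ)); i.e., among all measurable sets of ν_{a,σ}-measure at most δ, the cap cap(a,ρ) maximizes μ. -/

import Mathlib

open MeasureTheory Filter
open scoped RealInnerProductSpace ENNReal

/-- `I_m(σ) := ∫₀^σ r^{m-1} / √(1 - r²) dr`. -/
noncomputable def Ifun (m σ : ℝ) : ℝ :=
  ∫ r in (0:ℝ)..σ, r ^ (m - 1) / Real.sqrt (1 - r ^ 2)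

/-- The spherical cap `{z ∈ Sⁿ : ⟨z,a⟩ > √(1-ρ²)}` in `Sⁿ ⊆ ℝ^{n+1}`. -/
noncomputable def cap (n : ℕ) (a : EuclideanSpace ℝ (Fin (n + 1))) (ρ : ℝ) :
    Set (EuclideanSpace ℝ (Fin (n + 1))) :=
  {z | z ∈ Metric.sphere (0 : EuclideanSpace ℝ (Fin (n + 1))) 1 ∧
       Real.sqrt (1 - ρ ^ 2) < ⟪z, a⟫}

/-- `ν_{a,σ}`: the uniform probability measure on `cap(a,σ)`, i.e. the normalized
`n`-dimensional Hausdorff (surface) measure restricted to `cap(a,σ)`. -/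
noncomputable def nuMeasure (n : ℕ) (a : EuclideanSpace ℝ (Fin (n + 1))) (σ : ℝ) :
    Measure (EuclideanSpace ℝ (Fin (n + 1))) :=
  (μH[(n : ℝ)] (cap n a σ))⁻¹ • (μH[(n : ℝ)]).restrict (cap n a σ)

/-- `g(r) = C_{β,σ} · r^{-β} · h(r)` with `C_{β,σ} = I_n(σ)/I_{n-β}(σ)`. -/
noncomputable def gFun (n : ℕ) (σ β : ℝ) (h : ℝ → ℝ) (r : ℝ) : ℝ :=
  (Ifun n σ / Ifun ((n : ℝ) - β) σ) * r ^ (-β) * h r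

/-- The adversarial measure: the density of `μ` with respect to `ν_{a,σ}` at `z` is
`f(z) = g(sin θ(z,a))`, where `sin θ(z,a) = √(1 - ⟨z,a⟩²)` for unit vectors `z, a`. -/
noncomputable def advMeasure (n : ℕ) (a : EuclideanSpace ℝ (Fin (n + 1))) (σ β : ℝ)
    (h : ℝ → ℝ) : Measure (EuclideanSpace ℝ (Fin (n + 1))) :=
  (nuMeasure n a σ).withDensity
    (fun z => ENNReal.ofReal (gFun n σ β h (Real.sqrt (1 - ⟪z, a⟫ ^ 2))))

/-- Among all measurable sets `B ⊆ cap(a,σ)` of `ν_{a,σ}`-measure at most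
`δ = ν_{a,σ}(cap(a,ρ))`, the cap `cap(a,ρ)` maximizes the adversarial measure `μ`. -/
theorem stmt8 (n : ℕ) (hn : 1 ≤ n)
    (a : EuclideanSpace ℝ (Fin (n + 1)))
    (ha : a ∈ Metric.sphere (0 : EuclideanSpace ℝ (Fin (n + 1))) 1)
    (σ : ℝ) (hσ : σ ∈ Set.Ioc (0:ℝ) 1)
    (β : ℝ) (hβ0 : 0 ≤ β) (hβn : β < n)
    (h : ℝ → ℝ) (hcont : ContinuousOn h (Set.Icc 0 σ))
    (hpos : ∀ r ∈ Set.Icc (0:ℝ) σ, 0 < h r)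
    (hint : (∫ r in (0:ℝ)..σ, h r * (r ^ ((n : ℝ) - β - 1) / Real.sqrt (1 - r ^ 2)))
      = Ifun ((n : ℝ) - β) σ)
    (hmono : AntitoneOn (gFun n σ β h) (Set.Ioc 0 σ))
    (δ : ℝ) (hδ : δ ∈ Set.Ioo (0:ℝ) 1)
    (ρ : ℝ) (hρ : ρ ∈ Set.Ioo (0:ℝ) σ)
    (hρδ : nuMeasure n a σ (cap n a ρ) = ENNReal.ofReal δ)
    (B : Set (EuclideanSpace ℝ (Fin (n + 1)))) (hB : MeasurableSet B)
    (hBsub : B ⊆ cap n a σ)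
    (hB0 : 0 < nuMeasure n a σ B) (hBδ : nuMeasure n a σ B ≤ ENNReal.ofReal δ) :
    advMeasure n a σ β h B ≤ advMeasure n a σ β h (cap n a ρ) := by
  classical
  set S := cap n a σ with hS
  set Cρ := cap n a ρ with hCρdef
  have ha1 : ‖a‖ = 1 := by simpa using mem_sphere_zero_iff_norm.mp ha
  -- measurability of caps
  have capMeas : ∀ r : ℝ, MeasurableSet (cap n a r) := by
    intro r
    have : cap n a r = Metric.sphere (0 : EuclideanSpace ℝ (Fin (n+1))) 1 ∩
        {z | Real.sqrt (1 - r ^ 2) < ⟪z, a⟫} := rfl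
    rw [this]
    exact (Metric.isClosed_sphere.measurableSet).inter
      ((isOpen_lt continuous_const (continuous_id.inner continuous_const)).measurableSet)
  have hCmeas : MeasurableSet Cρ := capMeas ρ
  have hSmeas : MeasurableSet S := capMeas σ
  -- cap ρ ⊆ cap σ
  have hsub : Cρ ⊆ S := by
    intro z hz
    refine ⟨hz.1, lt_of_le_of_lt ?_ hz.2⟩
    apply Real.sqrt_le_sqrt
    nlinarith [hρ.1, hρ.2, hσ.2]
  -- pointwise bounds on the inner product for points on the sphere
  have hip : ∀ z ∈ S, 0 < ⟪z, a⟫ ∧ ⟪z, a⟫ ^ 2 ≤ 1 ∧ 1 - ⟪z, a⟫ ^ 2 < σ ^ 2 := by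
    intro z hz
    have hz1 : ‖z‖ = 1 := by simpa using mem_sphere_zero_iff_norm.mp hz.1
    have habs : |⟪z, a⟫| ≤ 1 := by
      have := abs_real_inner_le_norm z a
      rwa [hz1, ha1, one_mul] at this
    have hip0 : 0 < ⟪z, a⟫ := lt_of_le_of_lt (Real.sqrt_nonneg _) hz.2
    have hsq : Real.sqrt (1 - σ ^ 2) ^ 2 = 1 - σ ^ 2 :=
      Real.sq_sqrt (by nlinarith [hσ.2, hσ.1])
    refine ⟨hip0, by nlinarith [abs_le.mp habs], ?_⟩
    nlinarith [hz.2, Real.sqrt_nonneg (1 - σ ^ 2)]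
  set c : ℝ≥0∞ := ENNReal.ofReal (gFun n σ β h ρ) with hc
  set f : EuclideanSpace ℝ (Fin (n+1)) → ℝ≥0∞ :=
    fun z => ENNReal.ofReal (gFun n σ β h (Real.sqrt (1 - ⟪z, a⟫ ^ 2))) with hf
  have hρmem : ρ ∈ Set.Ioc (0:ℝ) σ := ⟨hρ.1, le_of_lt hρ.2⟩
  -- upper bound for f off cap ρ
  have hupper : ∀ z ∈ S \ Cρ, f z ≤ c := by
    rintro z ⟨hzS, hzC⟩
    obtain ⟨hip0, hip1, hipσ⟩ := hip z hzS
    have hle : ⟪z, a⟫ ≤ Real.sqrt (1 - ρ ^ 2) := by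
      by_contra hlt
      exact hzC ⟨hzS.1, lt_of_not_ge hlt⟩
    have hsqρ : Real.sqrt (1 - ρ ^ 2) ^ 2 = 1 - ρ ^ 2 :=
      Real.sq_sqrt (by nlinarith [hρ.1, hρ.2, hσ.2])
    have h1 : ρ ≤ Real.sqrt (1 - ⟪z, a⟫ ^ 2) := by
      rw [show ρ = Real.sqrt (ρ ^ 2) from (Real.sqrt_sq hρ.1.le).symm]
      apply Real.sqrt_le_sqrt
      nlinarith
    have h2 : Real.sqrt (1 - ⟪z, a⟫ ^ 2) ≤ σ := by
      rw [show σ = Real.sqrt (σ ^ 2) from (Real.sqrt_sq hσ.1.le).symm]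
      exact Real.sqrt_le_sqrt (le_of_lt hipσ)
    exact ENNReal.ofReal_le_ofReal
      (hmono hρmem ⟨lt_of_lt_of_le hρ.1 h1, h2⟩ h1)
  -- lower bound for f on cap ρ away from a
  have hlower : ∀ z ∈ Cρ \ {a}, c ≤ f z := by
    rintro z ⟨hzC, hza⟩
    have hzS := hsub hzC
    obtain ⟨hip0, hip1, _⟩ := hip z hzS
    have hz1 : ‖z‖ = 1 := by simpa using mem_sphere_zero_iff_norm.mp hzS.1
    have hiplt1 : ⟪z, a⟫ < 1 := by
      rcases lt_or_eq_of_le (by nlinarith : ⟪z, a⟫ ≤ 1) with hlt | heq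
      · exact hlt
      · exfalso
        apply hza
        have : ‖z - a‖ ^ 2 = 0 := by
          rw [@norm_sub_sq_real]; rw [hz1, ha1]; nlinarith
        have : z - a = 0 := by
          have := pow_eq_zero_iff (n := 2) (by norm_num) |>.mp this
          simpa [norm_eq_zero] using this
        simpa [sub_eq_zero] using this
    have hsqρ : Real.sqrt (1 - ρ ^ 2) ^ 2 = 1 - ρ ^ 2 :=
      Real.sq_sqrt (by nlinarith [hρ.1, hρ.2, hσ.2])
    have hgt : 1 - ρ ^ 2 < ⟪z, a⟫ ^ 2 := by
      nlinarith [hzC.2, Real.sqrt_nonneg (1 - ρ ^ 2)]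
    have h1 : 0 < Real.sqrt (1 - ⟪z, a⟫ ^ 2) :=
      Real.sqrt_pos.mpr (by nlinarith)
    have h2 : Real.sqrt (1 - ⟪z, a⟫ ^ 2) ≤ ρ := by
      rw [show ρ = Real.sqrt (ρ ^ 2) from (Real.sqrt_sq hρ.1.le).symm]
      apply Real.sqrt_le_sqrt; nlinarith
    exact ENNReal.ofReal_le_ofReal
      (hmono ⟨h1, h2.trans hρ.2.le⟩ hρmem h2)
  set ν := nuMeasure n a σ with hν
  -- ν of the singleton {a} is zero
  have hνa : ν {a} = 0 := by
    haveI : NoAtoms (μH[(n : ℝ)] :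
        Measure (EuclideanSpace ℝ (Fin (n+1)))) :=
      Measure.noAtoms_hausdorff _ (by exact_mod_cast Nat.lt_of_lt_of_le Nat.zero_lt_one hn)
    have : (μH[(n : ℝ)]).restrict S {a} = 0 := by
      rw [Measure.restrict_apply (measurableSet_singleton a)]
      exact measure_mono_null Set.inter_subset_left (by haveI : NullSingletonClass (μH[(n : ℝ)] : Measure (EuclideanSpace ℝ (Fin (n+1)))) := Measure.nullSingletonClass_hausdorff _ (by exact_mod_cast Nat.lt_of_lt_of_le Nat.zero_lt_one hn); exact measure_singleton a)
    simp [hν, nuMeasure, Measure.smul_apply, this]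
    exact Or.inr (measure_mono_null Set.inter_subset_left (by haveI : NullSingletonClass (μH[(n : ℝ)] : Measure (EuclideanSpace ℝ (Fin (n+1)))) := Measure.nullSingletonClass_hausdorff _ (by exact_mod_cast Nat.lt_of_lt_of_le Nat.zero_lt_one hn); exact measure_singleton a))
  set μ := advMeasure n a σ β h with hμ
  have hμapply : ∀ t : Set (EuclideanSpace ℝ (Fin (n+1))), MeasurableSet t →
      μ t = ∫⁻ z in t, f z ∂ν := by
    intro t ht
    rw [hμ, advMeasure, withDensity_apply _ ht]
  -- μ(B \ Cρ) ≤ c * ν(B \ Cρ)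
  have hBdiff : μ (B \ Cρ) ≤ c * ν (B \ Cρ) := by
    rw [hμapply _ (hB.diff hCmeas)]
    calc ∫⁻ z in B \ Cρ, f z ∂ν ≤ ∫⁻ _ in B \ Cρ, c ∂ν := by
          apply lintegral_mono_ae
          filter_upwards [ae_restrict_mem (hB.diff hCmeas)] with z hz
          exact hupper z ⟨hBsub hz.1, hz.2⟩
      _ = c * ν (B \ Cρ) := by rw [setLIntegral_const]
  -- c * ν(Cρ \ B) ≤ μ(Cρ \ B)
  have hCdiff : c * ν (Cρ \ B) ≤ μ (Cρ \ B) := by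
    have hmm : MeasurableSet ((Cρ \ B) \ {a}) :=
      (hCmeas.diff hB).diff (measurableSet_singleton a)
    have hν' : ν ((Cρ \ B) \ {a}) = ν (Cρ \ B) :=
      measure_diff_null hνa
    calc c * ν (Cρ \ B) = c * ν ((Cρ \ B) \ {a}) := by rw [hν']
      _ = ∫⁻ _ in (Cρ \ B) \ {a}, c ∂ν := by rw [setLIntegral_const]
      _ ≤ ∫⁻ z in (Cρ \ B) \ {a}, f z ∂ν := by
          apply lintegral_mono_ae
          filter_upwards [ae_restrict_mem hmm] with z hz
          exact hlower z ⟨hz.1.1, hz.2⟩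
      _ = μ ((Cρ \ B) \ {a}) := (hμapply _ hmm).symm
      _ ≤ μ (Cρ \ B) := measure_mono Set.diff_subset
  -- ν(B \ Cρ) ≤ ν(Cρ \ B)
  have hfin : ν (B ∩ Cρ) ≠ ⊤ :=
    ((measure_mono Set.inter_subset_left).trans hBδ).trans_lt ENNReal.ofReal_lt_top |>.ne
  have hνcomp : ν (B \ Cρ) ≤ ν (Cρ \ B) := by
    have h1 : ν (B \ Cρ) + ν (B ∩ Cρ) = ν B := measure_diff_add_inter B hCmeas
    have h2 : ν (Cρ \ B) + ν (Cρ ∩ B) = ν Cρ := measure_diff_add_inter Cρ hB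
    rw [Set.inter_comm] at h2
    have : ν (B \ Cρ) + ν (B ∩ Cρ) ≤ ν (Cρ \ B) + ν (B ∩ Cρ) := by
      rw [h1, h2]; exact hBδ.trans hρδ.ge
    exact (ENNReal.add_le_add_iff_right hfin).mp this
  -- assemble
  calc μ B = μ (B ∩ Cρ) + μ (B \ Cρ) := (measure_inter_add_diff B hCmeas).symm
    _ ≤ μ (B ∩ Cρ) + c * ν (B \ Cρ) := add_le_add_right hBdiff _
    _ ≤ μ (B ∩ Cρ) + c * ν (Cρ \ B) := add_le_add_right (mul_le_mul_right hνcomp c) _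
    _ ≤ μ (B ∩ Cρ) + μ (Cρ \ B) := add_le_add_right hCdiff _
    _ = μ (Cρ ∩ B) + μ (Cρ \ B) := by rw [Set.inter_comm]
    _ = μ Cρ := measure_inter_add_diff Cρ hB
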